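/- For every n ≥ 3, there is a gap between border rank and tensor rank: the border rank of W_n equals 2 while the tensor rank of W_n equals n. In particular, the set {T ∈ (ℂ²)^{⊗n} : rank(T) ≤ 2} is not closed. -/

import Mathlib

/-- `T` admits a tensor decomposition with at most `r` elementary tensors. -/
def hasRankLE (n d : ℕ) (T : (Fin n → Fin d) → ℂ) (r : ℕ) : Prop :=
  ∃ v : Fin r → Fin n → Fin d → ℂ, ∀ j, T j = ∑ α, ∏ i, v α i (j i)

/-- The tensor rank. -/
noncomputable def tensorRank (n d : ℕ) (T : (Fin n → Fin d) → ℂ) : ℕ :=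
  sInf {r | hasRankLE n d T r}

/-- `T` is a limit of tensors of rank at most `r`. -/
def hasBorderRankLE (n d : ℕ) (T : (Fin n → Fin d) → ℂ) (r : ℕ) : Prop :=
  T ∈ closure {S : (Fin n → Fin d) → ℂ | hasRankLE n d S r}

/-- The border rank. -/
noncomputable def borderRank (n d : ℕ) (T : (Fin n → Fin d) → ℂ) : ℕ :=
  sInf {r | hasBorderRankLE n d T r}

/-- The n-partite W-state. -/
noncomputable def Wstate (n : ℕ) : (Fin n → Fin 2) → ℂ := fun j =>
  if (Finset.univ.filter (fun i => j i = 1)).card = 1 then 1 else 0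

open Finset

def Scount (n : ℕ) (j : Fin n → Fin 2) : ℕ := ∑ i, if j i = 1 then 1 else 0

lemma Wstate_eq_S (n : ℕ) (j : Fin n → Fin 2) :
    Wstate n j = if Scount n j = 1 then 1 else 0 := by
  simp only [Wstate, Scount, Finset.card_filter]
  congr

lemma Scount_cons (n : ℕ) (x : Fin 2) (j : Fin n → Fin 2) :
    Scount (n+1) (Fin.cons x j) = (if x = 1 then 1 else 0) + Scount n j := by
  simp only [Scount, Fin.sum_univ_succ, Fin.cons_zero, Fin.cons_succ]

noncomputable def Atens (n : ℕ) (c : ℂ) : (Fin n → Fin 2) → ℂ :=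
  fun j => if Scount n j = 1 then 1 else if Scount n j = 0 then c else 0

lemma Wstate_eq_Atens (n : ℕ) : Wstate n = Atens n 0 := by
  funext j
  rw [Wstate_eq_S, Atens]
  split_ifs <;> rfl

lemma hasRankLE_mono {n d r r' : ℕ} (hn : 0 < n) (T : (Fin n → Fin d) → ℂ)
    (h : hasRankLE n d T r) (hr : r ≤ r') : hasRankLE n d T r' := by
  obtain ⟨v, hv⟩ := h
  refine ⟨fun α => if h : (α : ℕ) < r then v ⟨α, h⟩ else fun _ _ => 0, fun j => ?_⟩
  rw [hv j]
  set g : ℕ → ℂ := fun k => if h : k < r then ∏ i, v ⟨k, h⟩ i (j i) else 0 with hg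
  have key : ∀ α : Fin r', (∏ i, (if h : (α : ℕ) < r then v ⟨α, h⟩ else fun _ _ => 0) i (j i))
      = g ↑α := by
    intro α
    by_cases h : (α : ℕ) < r
    · simp [hg, h]
    · simp only [hg, h, dif_neg, not_false_iff]
      exact Finset.prod_eq_zero (mem_univ ⟨0, hn⟩) rfl
  rw [Finset.sum_congr rfl (fun α _ => key α)]
  have l1 : ∀ α : Fin r, (∏ i, v α i (j i)) = g ↑α := by
    intro α; simp [hg, α.isLt]
  rw [Finset.sum_congr rfl (fun α _ => l1 α), Fin.sum_univ_eq_sum_range g r,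
    Fin.sum_univ_eq_sum_range g r']
  exact Finset.sum_subset (Finset.range_subset_range.2 hr)
    (fun k _ hk => dif_neg (by simpa using hk))

lemma subst_lemma (n r : ℕ) (T : (Fin (n+2) → Fin 2) → ℂ)
    (h : hasRankLE (n+2) 2 T (r+1))
    (h1 : ∃ j0 : Fin (n+1) → Fin 2, T (Fin.cons 1 j0) ≠ 0) :
    ∃ c : ℂ, hasRankLE (n+1) 2
      (fun j => T (Fin.cons 0 j) + c * T (Fin.cons 1 j)) r := by
  obtain ⟨v, hv⟩ := h
  set u : Fin (r+1) → (Fin (n+1) → Fin 2) → ℂ :=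
    fun α j => ∏ i : Fin (n+1), v α i.succ (j i) with hu
  have hT : ∀ (x : Fin 2) (j : Fin (n+1) → Fin 2),
      T (Fin.cons x j) = ∑ α, v α 0 x * u α j := by
    intro x j
    rw [hv]
    refine Finset.sum_congr rfl fun α _ => ?_
    rw [Fin.prod_univ_succ]
    simp [hu]
  have hb : ∃ α₀ : Fin (r+1), v α₀ 0 1 ≠ 0 := by
    by_contra hb
    push_neg at hb
    obtain ⟨j0, hj0⟩ := h1
    apply hj0
    rw [hT 1 j0]
    exact Finset.sum_eq_zero fun α _ => by rw [hb α, zero_mul]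
  obtain ⟨α₀, hα₀⟩ := hb
  refine ⟨-(v α₀ 0 0) / v α₀ 0 1, ?_⟩
  set c : ℂ := -(v α₀ 0 0) / v α₀ 0 1 with hc
  have hcanc : v α₀ 0 0 + c * v α₀ 0 1 = 0 := by
    rw [hc, div_mul_cancel₀ _ hα₀]; ring
  refine ⟨fun β i x => if i = 0 then
      (v (α₀.succAbove β) 0 0 + c * v (α₀.succAbove β) 0 1) * v (α₀.succAbove β) (0 : Fin (n+1)).succ x
      else v (α₀.succAbove β) i.succ x, fun j => ?_⟩
  have hprod : ∀ β : Fin r, (∏ i : Fin (n+1), (if i = 0 then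
      (v (α₀.succAbove β) 0 0 + c * v (α₀.succAbove β) 0 1) * v (α₀.succAbove β) (0 : Fin (n+1)).succ (j i)
      else v (α₀.succAbove β) i.succ (j i)))
      = (v (α₀.succAbove β) 0 0 + c * v (α₀.succAbove β) 0 1) * u (α₀.succAbove β) j := by
    intro β
    simp only [hu, Fin.prod_univ_succ, Fin.succ_ne_zero, if_false, if_pos rfl, if_true,
      eq_self_iff_true]
    ring
  show T (Fin.cons 0 j) + c * T (Fin.cons 1 j) = _
  rw [hT 0 j, hT 1 j, Finset.mul_sum, ← Finset.sum_add_distrib]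
  have hcomb : ∀ α, v α 0 0 * u α j + c * (v α 0 1 * u α j)
      = (v α 0 0 + c * v α 0 1) * u α j := fun α => by ring
  rw [Finset.sum_congr rfl (fun α _ => hcomb α),
    Fin.sum_univ_succAbove (fun α => (v α 0 0 + c * v α 0 1) * u α j) α₀,
    hcanc, zero_mul, zero_add]
  exact Finset.sum_congr rfl fun β _ => (hprod β).symm

lemma claim_lemma : ∀ m : ℕ, ∀ c : ℂ, ¬ hasRankLE (m+1) 2 (Atens (m+1) c) m := by
  intro m
  induction m with
  | zero =>
    rintro c ⟨v, hv⟩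
    have := hv (fun _ => 1)
    simp [Atens, Scount] at this
  | succ m ih =>
    intro c h
    have h1 : ∃ j0 : Fin (m+1) → Fin 2, Atens (m+2) c (Fin.cons 1 j0) ≠ 0 := by
      refine ⟨fun _ => 0, ?_⟩
      have hz : Scount (m+1) (fun _ => (0:Fin 2)) = 0 := by
        simp only [Scount]
        exact Finset.sum_eq_zero fun i _ => by norm_num
      have : Atens (m+2) c (Fin.cons 1 (fun _ => 0)) = 1 := by
        simp only [Atens, Scount_cons, hz]
        norm_num
      simp [this]
    obtain ⟨c', hc'⟩ := subst_lemma m m (Atens (m+2) c) h h1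
    apply ih (c + c')
    have key : (fun j => Atens (m+2) c (Fin.cons 0 j) + c' * Atens (m+2) c (Fin.cons 1 j))
        = Atens (m+1) (c + c') := by
      funext j
      simp only [Atens, Scount_cons]
      norm_num
      split_ifs <;> first | ring1 | (exfalso; omega)
    rwa [key] at hc'

lemma W_hasRankLE (n : ℕ) (hn : 0 < n) : hasRankLE n 2 (Wstate n) n := by
  refine ⟨fun α i b => if b = (if (i:ℕ) = (α:ℕ) then 1 else 0) then 1 else 0, fun j => ?_⟩
  have hstep : ∀ α : Fin n,
      (∏ i, (if (j i) = (if (i:ℕ) = (α:ℕ) then (1:Fin 2) else 0) then (1:ℂ) else 0))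
      = if (Finset.univ.filter (fun i => j i = 1)) = {α} then 1 else 0 := by
    intro α
    rw [Finset.prod_boole]
    congr 1
    simp only [Finset.mem_univ, forall_true_left, eq_iff_iff]
    constructor
    · intro hall
      ext i
      simp only [Finset.mem_filter, Finset.mem_univ, true_and, Finset.mem_singleton]
      constructor
      · intro hi
        by_contra hne
        have hv : (i:ℕ) ≠ (α:ℕ) := fun h => hne (Fin.val_injective h)
        rw [hall i, if_neg hv] at hi
        exact (by decide : (0:Fin 2) ≠ 1) hi
      · rintro rfl
        rw [hall i, if_pos rfl]
    · intro hf i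
      by_cases hi : i = α
      · subst hi
        rw [if_pos rfl]
        have : i ∈ Finset.univ.filter (fun i => j i = 1) := by
          rw [hf]; exact Finset.mem_singleton_self i
        exact (Finset.mem_filter.mp this).2
      · have hv : (i:ℕ) ≠ (α:ℕ) := fun h => hi (Fin.val_injective h)
        rw [if_neg hv]
        have : i ∉ Finset.univ.filter (fun i => j i = 1) := by
          rw [hf]; simpa using hi
        have h1 : ¬ (j i = 1) := fun h => this (Finset.mem_filter.mpr ⟨Finset.mem_univ i, h⟩)
        exact (by decide : ∀ x : Fin 2, x ≠ 1 → x = 0) _ h1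
  rw [Finset.sum_congr rfl fun α _ => hstep α, Finset.sum_boole, Wstate]
  rcases eq_or_ne (Finset.univ.filter (fun i => j i = 1)).card 1 with h1 | h1
  · obtain ⟨a, ha⟩ := Finset.card_eq_one.mp h1
    rw [if_pos h1]
    have : Finset.univ.filter
        (fun α : Fin n => Finset.univ.filter (fun i => j i = 1) = {α}) = {a} := by
      ext α
      simp only [Finset.mem_filter, Finset.mem_univ, true_and, Finset.mem_singleton, ha]
      constructor
      · intro h; exact (Finset.singleton_inj.mp h).symm
      · rintro rfl; rfl
    rw [this]
    simp
  · rw [if_neg h1]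
    have : Finset.univ.filter
        (fun α : Fin n => Finset.univ.filter (fun i => j i = 1) = {α}) = ∅ := by
      ext α
      simp only [Finset.mem_filter, Finset.mem_univ, true_and, Finset.notMem_empty,
        iff_false]
      intro h
      exact h1 (by rw [h, Finset.card_singleton])
    rw [this]
    simp

noncomputable def Bv (n : ℕ) (ε : ℂ) : Fin 2 → Fin n → Fin 2 → ℂ := fun α i b =>
  if α = 0 then (if (i:ℕ) = 0 then (if b = 1 then 1 else ε⁻¹) else (if b = 1 then ε else 1))
  else (if (i:ℕ) = 0 then (if b = 1 then 0 else -ε⁻¹) else (if b = 1 then 0 else 1))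

lemma B_val (n : ℕ) (ε : ℂ) (hε : ε ≠ 0) (j : Fin (n+1) → Fin 2) :
    (∑ α : Fin 2, ∏ i, Bv (n+1) ε α i (j i)) =
      if Scount (n+1) j = 0 then 0 else ε ^ (Scount (n+1) j - 1) := by
  have ht : ∀ i : Fin n, ((i.succ : ℕ) = 0) = False := by
    intro i; simp [Fin.val_succ]
  set t : ℕ := ∑ i : Fin n, if j i.succ = 1 then 1 else 0 with htdef
  have hS : Scount (n+1) j = (if j 0 = 1 then 1 else 0) + t := by
    rw [Scount, Fin.sum_univ_succ]
  have h0 : (∏ i, Bv (n+1) ε 0 i (j i))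
      = (if j 0 = 1 then 1 else ε⁻¹) * ε ^ t := by
    rw [Fin.prod_univ_succ]
    simp only [Bv, if_pos rfl, ht, if_false, Fin.val_zero, if_true]
    congr 1
    rw [htdef, ← Finset.prod_pow_eq_pow_sum]
    refine Finset.prod_congr rfl fun i _ => ?_
    split_ifs <;> simp
  have h1 : (∏ i, Bv (n+1) ε 1 i (j i))
      = (if j 0 = 1 then 0 else -ε⁻¹) * (if t = 0 then 1 else 0) := by
    rw [Fin.prod_univ_succ]
    simp only [Bv, ht, if_false, Fin.val_zero, if_true, show ((1:Fin 2) = 0) = False by simp]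
    congr 1
    have heq : ∀ i : Fin n, (if j i.succ = 1 then (0:ℂ) else 1)
        = if ¬ (j i.succ = 1) then 1 else 0 := fun i => by split_ifs <;> simp_all
    rw [Finset.prod_congr rfl fun i _ => heq i, Finset.prod_boole]
    congr 1
    simp only [eq_iff_iff]
    rw [htdef, Finset.sum_eq_zero_iff]
    constructor
    · intro h i _
      rw [if_neg (h i (Finset.mem_univ i))]
    · intro h i _ hi
      have := h i (Finset.mem_univ i)
      rw [if_pos hi] at this
      exact one_ne_zero this
  rw [Fin.sum_univ_two, h0, h1, hS]
  have fin2 : ∀ x : Fin 2, x = 0 ∨ x = 1 := by decide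
  rcases fin2 (j 0) with hj0 | hj0
  · rw [hj0]
    simp only [show ((0:Fin 2) = 1) = False by simp, if_false, zero_add]
    rcases eq_or_ne t 0 with htz | htz
    · rw [htz]
      simp [hε]
    · rw [if_neg htz, if_neg htz, mul_zero, add_zero]
      obtain ⟨s, hts⟩ : ∃ s, t = s + 1 := ⟨t - 1, by omega⟩
      rw [hts]
      rw [pow_succ', ← mul_assoc, inv_mul_cancel₀ hε, one_mul]
      simp
  · rw [hj0]
    norm_num

lemma W_border (n : ℕ) : hasBorderRankLE (n+1) 2 (Wstate (n+1)) 2 := by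
  have hε : ∀ N : ℕ, ((N:ℂ)+1)⁻¹ ≠ 0 := fun N => inv_ne_zero (Nat.cast_add_one_ne_zero N)
  refine mem_closure_of_tendsto
    (f := fun N : ℕ => fun j : Fin (n+1) → Fin 2 => ∑ α : Fin 2, ∏ i, Bv (n+1) (((N:ℂ)+1)⁻¹) α i (j i))
    (b := Filter.atTop) ?_ ?_
  · rw [tendsto_pi_nhds]
    intro j
    have heq : (fun N : ℕ => ∑ α : Fin 2, ∏ i, Bv (n+1) (((N:ℂ)+1)⁻¹) α i (j i))
        = fun N : ℕ => if Scount (n+1) j = 0 then 0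
            else (((N:ℂ)+1)⁻¹) ^ (Scount (n+1) j - 1) := by
      funext N; exact B_val n _ (hε N) j
    rw [heq, Wstate_eq_S]
    rcases eq_or_ne (Scount (n+1) j) 0 with h0 | h0
    · simp only [h0, if_pos rfl]
      norm_num
    · simp only [if_neg h0]
      rcases eq_or_ne (Scount (n+1) j) 1 with h1 | h1
      · simp only [h1, if_pos rfl]
        norm_num
      · simp only [if_neg h1]
        have hp : Scount (n+1) j - 1 ≠ 0 := by omega
        have hre : Filter.Tendsto (fun N : ℕ => (1 / ((N:ℝ)+1) : ℝ)) Filter.atTop (nhds 0) :=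
          tendsto_one_div_add_atTop_nhds_zero_nat
        have htend : Filter.Tendsto (fun N : ℕ => ((N:ℂ)+1)⁻¹) Filter.atTop (nhds 0) := by
          have hcomp := (Complex.continuous_ofReal.tendsto 0).comp hre
          simp only [Function.comp_def, Complex.ofReal_div, Complex.ofReal_inv, Complex.ofReal_one,
            Complex.ofReal_add, Complex.ofReal_natCast, Complex.ofReal_zero, one_div] at hcomp
          exact hcomp
        have hpow := htend.pow (Scount (n+1) j - 1)
        rwa [zero_pow hp] at hpow
  · exact Filter.Eventually.of_forall fun N => ⟨Bv (n+1) (((N:ℂ)+1)⁻¹), fun j => rfl⟩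

lemma hasBorderRankLE_mono {n d r r' : ℕ} (hn : 0 < n) (T : (Fin n → Fin d) → ℂ)
    (h : hasBorderRankLE n d T r) (hr : r ≤ r') : hasBorderRankLE n d T r' :=
  closure_mono (fun S hS => hasRankLE_mono hn S hS hr) h

lemma not_border_one (m : ℕ) : ¬ hasBorderRankLE (m+3) 2 (Wstate (m+3)) 1 := by
  intro hW
  set x : Fin 2 → Fin 2 → (Fin (m+3) → Fin 2) :=
    fun a b => Fin.cons a (Fin.cons b (fun _ => 0)) with hx
  set F : ((Fin (m+3) → Fin 2) → ℂ) → ℂ :=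
    fun S => S (x 0 0) * S (x 1 1) - S (x 0 1) * S (x 1 0) with hF
  have hFcont : Continuous F :=
    ((continuous_apply (x 0 0)).mul (continuous_apply (x 1 1))).sub
      ((continuous_apply (x 0 1)).mul (continuous_apply (x 1 0)))
  have hclosed : IsClosed {S : (Fin (m+3) → Fin 2) → ℂ | F S = 0} :=
    isClosed_eq hFcont continuous_const
  have hsub : {S : (Fin (m+3) → Fin 2) → ℂ | hasRankLE (m+3) 2 S 1}
      ⊆ {S | F S = 0} := by
    rintro S ⟨v, hv⟩
    have hSv : ∀ y, S y = ∏ i, v 0 i (y i) := by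
      intro y; rw [hv y, Fin.sum_univ_one]
    simp only [Set.mem_setOf_eq, hF]
    rw [hSv, hSv, hSv, hSv]
    simp only [hx, Fin.prod_univ_succ, Fin.cons_zero, Fin.cons_succ]
    ring
  have hmem : F (Wstate (m+3)) = 0 := (IsClosed.closure_subset_iff hclosed).mpr hsub hW
  have hSx : ∀ a b : Fin 2, Scount (m+3) (x a b)
      = (if a = 1 then 1 else 0) + (if b = 1 then 1 else 0) := by
    intro a b
    simp only [hx, Scount, Fin.sum_univ_succ, Fin.cons_zero, Fin.cons_succ]
    norm_num
  have hval : F (Wstate (m+3)) = -1 := by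
    simp only [hF, Wstate_eq_S, hSx]
    norm_num
  rw [hval] at hmem
  norm_num at hmem

theorem borderRank_rank_gap_Wstate (n : ℕ) (hn : 3 ≤ n) :
    borderRank n 2 (Wstate n) = 2 ∧ tensorRank n 2 (Wstate n) = n ∧
    ¬ IsClosed {T : (Fin n → Fin 2) → ℂ | hasRankLE n 2 T 2} := by
  obtain ⟨m, rfl⟩ : ∃ m, n = m + 3 := ⟨n - 3, by omega⟩
  have hpos : 0 < m + 3 := by omega
  have hB2 : hasBorderRankLE (m+3) 2 (Wstate (m+3)) 2 := W_border (m+2)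
  have hnot : ¬ hasRankLE (m+3) 2 (Wstate (m+3)) (m+2) := by
    rw [Wstate_eq_Atens]
    exact claim_lemma (m+2) 0
  have low : ∀ r, r ≤ m + 2 → ¬ hasRankLE (m+3) 2 (Wstate (m+3)) r :=
    fun r hr h => hnot (hasRankLE_mono hpos _ h hr)
  have h2 : 2 ∈ {r | hasBorderRankLE (m+3) 2 (Wstate (m+3)) r} := hB2
  have hlb : ∀ r ∈ {r | hasBorderRankLE (m+3) 2 (Wstate (m+3)) r}, 2 ≤ r := by
    intro r hr
    by_contra hlt
    push_neg at hlt
    exact not_border_one m (hasBorderRankLE_mono hpos _ hr (by omega))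
  have hn3 : (m+3) ∈ {r | hasRankLE (m+3) 2 (Wstate (m+3)) r} := W_hasRankLE (m+3) hpos
  have hlb2 : ∀ r ∈ {r | hasRankLE (m+3) 2 (Wstate (m+3)) r}, m + 3 ≤ r := by
    intro r hr
    by_contra hlt
    push_neg at hlt
    exact low r (by omega) hr
  refine ⟨le_antisymm (Nat.sInf_le h2) (le_csInf ⟨2, h2⟩ hlb),
    le_antisymm (Nat.sInf_le hn3) (le_csInf ⟨m+3, hn3⟩ hlb2), ?_⟩
  intro hcl
  exact low 2 (by omega) (hcl.closure_subset hB2)
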